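/- arXiv:1811.10987 — 3 statements merged into one kernel-verified Lean document; each statement's English description precedes it below -/
import Mathlib

section
/- Let A be a commutative unital Fréchet algebra over ℂ in which every nonzero element is invertible. Then A is isomorphic to ℂ, i.e., every element of A is a complex scalar multiple of the identity. -/
open Filter Topology Metric Set

namespace GelfandMazurAux

/-- Recursion helper: builds the sequence of chosen indices, where `pick prev K` chooses
the `K`-th index given the function `prev` recording the previously chosen indices. -/
noncomputable def gmSeq (pick : (ℕ → ℕ) → ℕ → ℕ) : ℕ → ℕ → ℕ
  | 0 => fun _ => pick (fun _ => 0) 0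
  | k + 1 => fun i => if i ≤ k then gmSeq pick k i else pick (gmSeq pick k) (k + 1)

variable {A : Type*} [Field A] [PseudoMetricSpace A] [CompleteSpace A]
  [T2Space A] [IsTopologicalRing A]

/-- Key lemma: in a complete (pseudo)metrizable topological ring that is a field,
any sequence converging to `1` has a subsequence whose inverses converge to `1`. -/
theorem subseq (x : ℕ → A) (hx0 : ∀ n, x n ≠ 0) (hx1 : Tendsto x atTop (𝓝 1)) :
    ∃ φ : ℕ → ℕ, StrictMono φ ∧ Tendsto (fun k => (x (φ k))⁻¹) atTop (𝓝 1) := by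
  classical
  have h10 : (0 : ℝ) < dist (1 : A) 0 := by
    rcases (dist_nonneg (x := (1 : A)) (y := 0)).lt_or_eq with h | h
    · exact h
    · exact absurd (inseparable_iff.2 h.symm).eq one_ne_zero
  set d0 : ℝ := dist (1 : A) 0 with hd0
  set ε : ℕ → ℝ := fun k => min ((1 / 2 : ℝ) ^ (k + 1)) (d0 * (1 / 2) ^ (k + 2)) with hε
  have hεpos : ∀ k, 0 < ε k := fun k => lt_min (by positivity) (by positivity)
  have hε1 : ∀ k, ε k ≤ (1 / 2 : ℝ) ^ (k + 1) := fun k => min_le_left _ _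
  have hε2 : ∀ k, ε k ≤ d0 * (1 / 2) ^ (k + 2) := fun k => min_le_right _ _
  have hsummable : Summable ε := by
    refine Summable.of_nonneg_of_le (fun k => (hεpos k).le) hε1 ?_
    have := summable_geometric_two.mul_left (1 / 2 : ℝ)
    refine this.congr fun k => ?_
    rw [pow_succ]; ring
  -- the chooser
  have spec : ∀ (prev : ℕ → ℕ) (K : ℕ), ∃ m : ℕ,
      (∀ j, j < K → prev j < m) ∧
      (∀ j, j ≤ K → dist ((∏ i ∈ Finset.Ico j K, x (prev i)) * x m)
        (∏ i ∈ Finset.Ico j K, x (prev i)) < ε K) := by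
    intro prev K
    have h1 : ∀ᶠ m in atTop, ∀ j, j < K → prev j < m := by
      filter_upwards [eventually_gt_atTop ((Finset.range K).sup prev)] with m hm j hj
      exact lt_of_le_of_lt (Finset.le_sup (Finset.mem_range.2 hj)) hm
    have h2 : ∀ᶠ m in atTop, ∀ j, j ≤ K →
        dist ((∏ i ∈ Finset.Ico j K, x (prev i)) * x m)
          (∏ i ∈ Finset.Ico j K, x (prev i)) < ε K := by
      have : ∀ j : ℕ, ∀ᶠ m in atTop,
          dist ((∏ i ∈ Finset.Ico j K, x (prev i)) * x m)
            (∏ i ∈ Finset.Ico j K, x (prev i)) < ε K := by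
        intro j
        have ht : Tendsto (fun m => (∏ i ∈ Finset.Ico j K, x (prev i)) * x m) atTop
            (𝓝 ((∏ i ∈ Finset.Ico j K, x (prev i)) * 1)) :=
          hx1.const_mul _
        rw [mul_one] at ht
        exact (Metric.tendsto_nhds.1 ht) (ε K) (hεpos K)
      have hall : ∀ᶠ m in atTop, ∀ j ∈ Finset.range (K + 1),
          dist ((∏ i ∈ Finset.Ico j K, x (prev i)) * x m)
            (∏ i ∈ Finset.Ico j K, x (prev i)) < ε K :=
        (Finset.range (K + 1)).eventually_all.2 fun j _ => this j
      filter_upwards [hall] with m hm j hj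
      exact hm j (Finset.mem_range.2 (Nat.lt_succ_of_le hj))
    exact ((h1.and h2).exists)
  set pick : (ℕ → ℕ) → ℕ → ℕ := fun prev K => (spec prev K).choose with hpick
  have pick1 : ∀ prev K, ∀ j, j < K → prev j < pick prev K :=
    fun prev K => (spec prev K).choose_spec.1
  have pick2 : ∀ prev K, ∀ j, j ≤ K →
      dist ((∏ i ∈ Finset.Ico j K, x (prev i)) * x (pick prev K))
        (∏ i ∈ Finset.Ico j K, x (prev i)) < ε K :=
    fun prev K => (spec prev K).choose_spec.2
  set n : ℕ → ℕ := fun k => gmSeq pick k k with hn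
  have hagree : ∀ k i, i ≤ k → gmSeq pick k i = n i := by
    intro k
    induction k with
    | zero =>
      intro i hi
      interval_cases i
      rfl
    | succ k ih =>
      intro i hi
      rcases eq_or_lt_of_le hi with h | h
      · subst h; rfl
      · have hik : i ≤ k := Nat.lt_succ_iff.1 h
        show (if i ≤ k then gmSeq pick k i else pick (gmSeq pick k) (k + 1)) = n i
        rw [if_pos hik]
        exact ih i hik
  have hsucc : ∀ K, n (K + 1) = pick (gmSeq pick K) (K + 1) := by
    intro K
    show (if K + 1 ≤ K then gmSeq pick K (K + 1) else pick (gmSeq pick K) (K + 1)) = _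
    rw [if_neg (by omega)]
  have hzero : n 0 = pick (fun _ => 0) 0 := rfl
  set s : ℕ → ℕ → A := fun j k => ∏ i ∈ Finset.Ico j k, x (n i) with hs
  have hs0ne : ∀ j k, s j k ≠ 0 := fun j k =>
    Finset.prod_ne_zero_iff.2 fun i _ => hx0 (n i)
  have hsjj : ∀ j, s j j = 1 := fun j => by simp [hs]
  -- key step estimate
  have hstep : ∀ K j, dist (s j (K + 1)) (s j K) ≤ ε K := by
    intro K j
    rcases le_or_gt j K with hj | hj
    · have hsucc_prod : s j (K + 1) = s j K * x (n K) := Finset.prod_Ico_succ_top hj _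
      rw [hsucc_prod]
      cases K with
      | zero =>
        have hj0 : j = 0 := Nat.le_zero.1 hj
        subst hj0
        have h := pick2 (fun _ => 0) 0 0 le_rfl
        simpa [hs, hzero] using h.le
      | succ k =>
        have hcong : (∏ i ∈ Finset.Ico j (k + 1), x (gmSeq pick k i)) = s j (k + 1) := by
          refine Finset.prod_congr rfl fun i hi => ?_
          rw [hagree k i (Nat.lt_succ_iff.1 (Finset.mem_Ico.1 hi).2)]
        have h := pick2 (gmSeq pick k) (k + 1) j hj
        rw [hcong, ← hsucc k] at h
        exact h.le
    · have e1 : Finset.Ico j (K + 1) = ∅ := Finset.Ico_eq_empty (by omega)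
      have e2 : Finset.Ico j K = ∅ := Finset.Ico_eq_empty (by omega)
      have h1 : s j (K + 1) = 1 := by simp [hs, e1]
      have h2 : s j K = 1 := by simp [hs, e2]
      rw [h1, h2, dist_self]
      exact (hεpos K).le
  have hcauchy : ∀ j, CauchySeq (fun k => s j k) := fun j =>
    cauchySeq_of_dist_le_of_summable ε (fun k => by rw [dist_comm]; exact hstep k j) hsummable
  have hexists : ∀ j, ∃ y : A, Tendsto (fun k => s j k) atTop (𝓝 y) := fun j =>
    cauchySeq_tendsto_of_complete (hcauchy j)
  choose t ht using hexists
  have hdist : ∀ j, dist (s j j) (t j) ≤ ∑' m, ε (j + m) := fun j =>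
    dist_le_tsum_of_dist_le_of_tendsto ε (fun k => by rw [dist_comm]; exact hstep k j)
      hsummable (ht j) j
  have hsum_shift : ∀ j : ℕ, Summable fun m => ε (j + m) := fun j =>
    hsummable.comp_injective (add_right_injective j)
  have hsum_geo : ∀ j : ℕ, Summable fun m : ℕ => (1 / 2 : ℝ) ^ (j + m + 1) := by
    intro j
    have := summable_geometric_two.mul_left ((1 / 2 : ℝ) ^ (j + 1))
    refine this.congr fun m => ?_
    rw [← pow_add]
    congr 1
    omega
  have htail : ∀ j, (∑' m, ε (j + m)) ≤ (1 / 2 : ℝ) ^ j := by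
    intro j
    calc (∑' m, ε (j + m)) ≤ ∑' m : ℕ, (1 / 2 : ℝ) ^ (j + m + 1) :=
          Summable.tsum_le_tsum (fun m => hε1 (j + m)) (hsum_shift j) (hsum_geo j)
    _ = (1 / 2 : ℝ) ^ (j + 1) * ∑' m : ℕ, (1 / 2 : ℝ) ^ m := by
          rw [← tsum_mul_left]
          congr 1
          funext m
          rw [← pow_add]
          congr 1
          omega
    _ = (1 / 2 : ℝ) ^ j := by
          rw [tsum_geometric_two, pow_succ]; ring
  have hdist1 : ∀ j, dist (t j) 1 ≤ (1 / 2 : ℝ) ^ j := by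
    intro j
    rw [dist_comm]
    calc dist (1 : A) (t j) = dist (s j j) (t j) := by rw [hsjj]
    _ ≤ ∑' m, ε (j + m) := hdist j
    _ ≤ (1 / 2 : ℝ) ^ j := htail j
  have htend1 : Tendsto t atTop (𝓝 (1 : A)) := by
    rw [tendsto_iff_dist_tendsto_zero]
    exact squeeze_zero (fun j => dist_nonneg) hdist1
      (tendsto_pow_atTop_nhds_zero_of_lt_one (by norm_num) (by norm_num))
  -- t 0 ≠ 0
  have ht0ne : t 0 ≠ 0 := by
    intro h0
    have h1 : dist (1 : A) (t 0) ≤ d0 / 2 := by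
      calc dist (1 : A) (t 0) = dist (s 0 0) (t 0) := by rw [hsjj]
      _ ≤ ∑' m, ε (0 + m) := hdist 0
      _ ≤ ∑' m : ℕ, d0 * (1 / 2) ^ (m + 2) := by
            refine Summable.tsum_le_tsum (fun m => ?_) (hsum_shift 0) ?_
            · simpa using hε2 (0 + m)
            · exact (summable_geometric_two.mul_left (d0 * (1 / 2 : ℝ) ^ 2)).congr fun m => by
                rw [pow_add]; ring
      _ = d0 * ∑' m : ℕ, (1 / 2 : ℝ) ^ (m + 2) := by
            rw [← tsum_mul_left]
      _ ≤ d0 / 2 := by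
            have : (∑' m : ℕ, (1 / 2 : ℝ) ^ (m + 2)) = (1 / 2 : ℝ) ^ 2 * ∑' m : ℕ, (1/2:ℝ) ^ m := by
              rw [← tsum_mul_left]
              congr 1
              funext m
              rw [← pow_add]
              congr 1
              omega
            rw [this, tsum_geometric_two]
            nlinarith [h10]
    rw [h0] at h1
    have : d0 ≤ d0 / 2 := by simpa [hd0] using h1
    linarith
  have htne : ∀ k, t k ≠ 0 := by
    intro k hk
    apply ht0ne
    have hsplitk : t 0 = s 0 k * t k := by
      refine tendsto_nhds_unique (ht 0) ?_
      have h2 : Tendsto (fun m => s 0 k * s k m) atTop (𝓝 (s 0 k * t k)) :=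
        (ht k).const_mul _
      refine h2.congr' ?_
      filter_upwards [eventually_ge_atTop k] with m hm
      exact Finset.prod_Ico_consecutive _ (Nat.zero_le k) hm
    rw [hsplitk, hk, mul_zero]
  have hsplit : ∀ k, t 0 = s 0 k * t k := by
    intro k
    refine tendsto_nhds_unique (ht 0) ?_
    have h2 : Tendsto (fun m => s 0 k * s k m) atTop (𝓝 (s 0 k * t k)) :=
      (ht k).const_mul _
    refine h2.congr' ?_
    filter_upwards [eventually_ge_atTop k] with m hm
    exact Finset.prod_Ico_consecutive _ (Nat.zero_le k) hm
  -- strict monotonicity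
  have hmono : StrictMono n := by
    refine strictMono_nat_of_lt_succ fun K => ?_
    have := pick1 (gmSeq pick K) (K + 1) K (Nat.lt_succ_self K)
    rw [← hsucc K] at this
    exact this
  -- the key identity
  have hkey : ∀ K, (x (n K))⁻¹ = (t 0)⁻¹ * t (K + 1) * s 0 K := by
    intro K
    refine inv_eq_of_mul_eq_one_left ?_
    have hx_eq : s 0 K * x (n K) = s 0 (K + 1) :=
      (Finset.prod_Ico_succ_top (Nat.zero_le K) _).symm
    calc (t 0)⁻¹ * t (K + 1) * s 0 K * x (n K)
        = (t 0)⁻¹ * (t (K + 1) * (s 0 K * x (n K))) := by ring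
    _ = (t 0)⁻¹ * (t (K + 1) * s 0 (K + 1)) := by rw [hx_eq]
    _ = (t 0)⁻¹ * (s 0 (K + 1) * t (K + 1)) := by ring
    _ = (t 0)⁻¹ * t 0 := by rw [← hsplit (K + 1)]
    _ = 1 := inv_mul_cancel₀ ht0ne
  refine ⟨n, hmono, ?_⟩
  have hT : Tendsto (fun K => t (K + 1)) atTop (𝓝 (1 : A)) :=
    htend1.comp (tendsto_add_atTop_nat 1)
  have hfin : Tendsto (fun K => (t 0)⁻¹ * t (K + 1) * s 0 K) atTop
      (𝓝 ((t 0)⁻¹ * 1 * t 0)) :=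
    ((tendsto_const_nhds.mul hT).mul (ht 0))
  rw [mul_one, inv_mul_cancel₀ ht0ne] at hfin
  refine hfin.congr fun K => (hkey K).symm

/-- Inversion is sequentially continuous at `1`. -/
theorem inv_one (x : ℕ → A) (hx0 : ∀ n, x n ≠ 0) (hx1 : Tendsto x atTop (𝓝 1)) :
    Tendsto (fun n => (x n)⁻¹) atTop (𝓝 1) := by
  by_contra hcon
  have hnot : ¬ ∀ U ∈ 𝓝 (1 : A), ∀ᶠ n in atTop, (x n)⁻¹ ∈ U := by
    intro h
    exact hcon fun U hU => h U hU
  push_neg at hnot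
  obtain ⟨U, hU, hne⟩ := hnot
  obtain ⟨ψf, hψmono, hψ⟩ := extraction_of_frequently_atTop hne
  obtain ⟨θ, hθmono, hθ⟩ := subseq (fun k => x (ψf k)) (fun k => hx0 _)
    (hx1.comp hψmono.tendsto_atTop)
  have hev : ∀ᶠ k in atTop, (x (ψf (θ k)))⁻¹ ∈ U := hθ.eventually hU
  obtain ⟨k, hk⟩ := hev.exists
  exact hψ (θ k) hk

/-- Inversion is continuous (filter version) at any nonzero point. -/
theorem inv_tendsto {α : Type*} {l : Filter α} [l.IsCountablyGenerated] {u : α → A} {b : A}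
    (hb : b ≠ 0) (hu : ∀ i, u i ≠ 0) (h : Tendsto u l (𝓝 b)) :
    Tendsto (fun i => (u i)⁻¹) l (𝓝 b⁻¹) := by
  have : Tendsto ((fun v : A => v⁻¹) ∘ u) l (𝓝 b⁻¹) := by
    rw [tendsto_iff_seq_tendsto] at h ⊢
    intro a ha
    have h1 : Tendsto (fun n => u (a n) * b⁻¹) atTop (𝓝 (1 : A)) := by
      have h2 := (h a ha).mul_const b⁻¹
      simpa [mul_inv_cancel₀ hb] using h2
    have h2 := inv_one (fun n => u (a n) * b⁻¹)
      (fun n => mul_ne_zero (hu _) (inv_ne_zero hb)) h1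
    have h3 : Tendsto (fun n => b⁻¹ * (u (a n) * b⁻¹)⁻¹) atTop (𝓝 (b⁻¹ * 1)) :=
      h2.const_mul _
    rw [mul_one] at h3
    refine h3.congr fun nn => ?_
    show b⁻¹ * (u (a nn) * b⁻¹)⁻¹ = (u (a nn))⁻¹
    rw [mul_inv, inv_inv, mul_comm (u (a nn))⁻¹ b, ← mul_assoc, inv_mul_cancel₀ hb, one_mul]
  exact this

/-- Metric-free version of `inv_tendsto`, for a complete uniform additive group field with
countably generated uniformity. -/
theorem inv_tendsto' {B : Type*} [Field B] [u : UniformSpace B] [CompleteSpace B]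
    [T2Space B] [IsTopologicalRing B] [(uniformity B).IsCountablyGenerated]
    {α : Type*} {l : Filter α} [l.IsCountablyGenerated] {v : α → B} {b : B}
    (hb : b ≠ 0) (hv : ∀ i, v i ≠ 0) (h : Tendsto v l (𝓝 b)) :
    Tendsto (fun i => (v i)⁻¹) l (𝓝 b⁻¹) := by
  obtain ⟨m, rfl⟩ := UniformSpace.metrizable_uniformity B
  exact inv_tendsto (A := B) hb hv h

/-- Transfer local convexity from an arbitrary real module structure to the canonical
one (restriction of scalars from `ℂ`), via rational convex combinations and closures.
The hypothesis provides, inside every neighborhood of `0`, a neighborhood of `0` closed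
under rational convex combinations (phrased with complex scalars to be structure-free). -/
theorem lcs_canonical (A : Type*) [AddCommGroup A] [Module ℂ A]
    [UniformSpace A] [IsUniformAddGroup A] [ContinuousSMul ℂ A]
    (h : ∀ U ∈ 𝓝 (0 : A), ∃ S ∈ 𝓝 (0 : A),
      (∀ u ∈ S, ∀ v ∈ S, ∀ q : ℚ, 0 ≤ q → q ≤ 1 →
        ((q : ℂ)) • u + (((1 - q : ℚ) : ℂ)) • v ∈ S) ∧ S ⊆ U) :
    LocallyConvexSpace ℝ A := by
  haveI : ContinuousSMul ℝ A := by
    constructor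
    have h1 : Continuous fun p : ℝ × A => ((p.1 : ℂ)) • p.2 :=
      continuous_smul.comp ((Complex.continuous_ofReal.comp continuous_fst).prodMk
        continuous_snd)
    have h2 : (fun p : ℝ × A => p.1 • p.2) = fun p : ℝ × A => ((p.1 : ℂ)) • p.2 :=
      funext fun p => (Complex.coe_smul p.1 p.2).symm
    rw [h2]
    exact h1
  have key : ∀ (q : ℚ) (w : A), ((q : ℂ)) • w = ((q : ℝ)) • w := by
    intro q w
    rw [show ((q : ℂ)) = (((q : ℝ)) : ℂ) by push_cast; ring, Complex.coe_smul]
  rw [locallyConvexSpace_iff_exists_convex_subset_zero]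
  intro U hU
  obtain ⟨W, hWmem, hWclosed, hWsub⟩ := exists_mem_nhds_isClosed_subset hU
  obtain ⟨S, hSmem, hSconv, hSsub⟩ := h W hWmem
  refine ⟨closure S, mem_of_superset hSmem subset_closure, ?_, ?_⟩
  · -- convexity of the closure for the canonical structure
    intro x hx y hy a b ha hb hab
    have ha1 : a ≤ 1 := by linarith
    have hq : ∃ q : ℕ → ℚ, (∀ nn, 0 ≤ q nn ∧ q nn ≤ 1) ∧
        Tendsto (fun nn => ((q nn : ℝ))) atTop (𝓝 a) := by
      have hsel : ∀ nn : ℕ, ∃ q : ℚ, 0 ≤ q ∧ q ≤ 1 ∧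
          |(q : ℝ) - a| ≤ 1 / ((nn : ℝ) + 1) := by
        intro nn
        have hpos : (0 : ℝ) < 1 / ((nn : ℝ) + 1) := by positivity
        rcases lt_or_eq_of_le ha1 with hlt | heq
        · obtain ⟨q, hq1, hq2⟩ := exists_rat_btwn
            (show a < min 1 (a + 1 / ((nn : ℝ) + 1)) from lt_min hlt (by linarith))
          rw [lt_min_iff] at hq2
          refine ⟨q, ?_, ?_, ?_⟩
          · exact_mod_cast le_of_lt (lt_of_le_of_lt ha hq1)
          · exact_mod_cast le_of_lt hq2.1
          · rw [abs_le]
            refine ⟨by linarith, by linarith [hq2.2]⟩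
        · subst heq
          obtain ⟨q, hq1, hq2⟩ := exists_rat_btwn
            (show max 0 (1 - 1 / ((nn : ℝ) + 1)) < (1 : ℝ) from
              max_lt one_pos (by linarith))
          have hq0 : (0 : ℝ) < q := lt_of_le_of_lt (le_max_left _ _) hq1
          have hq3 : 1 - 1 / ((nn : ℝ) + 1) < (q : ℝ) := lt_of_le_of_lt (le_max_right _ _) hq1
          refine ⟨q, ?_, ?_, ?_⟩
          · exact_mod_cast le_of_lt hq0
          · exact_mod_cast le_of_lt hq2
          · rw [abs_le]
            refine ⟨by linarith, by linarith⟩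
      choose q hq0 hq1 hq2 using hsel
      refine ⟨q, fun nn => ⟨hq0 nn, hq1 nn⟩, ?_⟩
      rw [tendsto_iff_dist_tendsto_zero]
      refine squeeze_zero (f := fun nn => dist ((q nn : ℝ)) a)
        (g := fun nn => 1 / ((nn : ℝ) + 1)) (fun nn => dist_nonneg) (fun nn => ?_) ?_
      · exact (Real.dist_eq _ _).le.trans (hq2 nn)
      · exact tendsto_one_div_add_atTop_nhds_zero_nat
    obtain ⟨q, hq01, hqa⟩ := hq
    have hmain : ∀ u ∈ S, ∀ v ∈ S, a • u + b • v ∈ closure S := by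
      intro u hu v hv
      have hz : ∀ nn : ℕ, ((q nn : ℝ)) • u + (1 - (q nn : ℝ)) • v ∈ S := by
        intro nn
        have h2 := hSconv u hu v hv (q nn) (hq01 nn).1 (hq01 nn).2
        rw [key, key] at h2
        have e2 : (((1 - q nn : ℚ) : ℝ)) = 1 - ((q nn : ℝ)) := by push_cast; ring
        rwa [e2] at h2
      have hten : Tendsto (fun nn => ((q nn : ℝ)) • u + (1 - (q nn : ℝ)) • v) atTop
          (𝓝 (a • u + b • v)) := by
        have h1 : Tendsto (fun nn => ((q nn : ℝ)) • u) atTop (𝓝 (a • u)) :=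
          hqa.smul tendsto_const_nhds
        have h2 : Tendsto (fun nn => (1 - (q nn : ℝ)) • v) atTop (𝓝 (b • v)) := by
          have h3 : Tendsto (fun nn => 1 - ((q nn : ℝ))) atTop (𝓝 b) := by
            have h4 := hqa.const_sub 1
            rw [show (1 : ℝ) - a = b by linarith] at h4
            exact h4
          exact h3.smul tendsto_const_nhds
        exact h1.add h2
      exact mem_closure_of_tendsto hten (Filter.Eventually.of_forall hz)
    have hcont : Continuous fun p : A × A => a • p.1 + b • p.2 :=
      ((continuous_const.smul continuous_fst).add (continuous_const.smul continuous_snd))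
    have hxy : (x, y) ∈ closure (S ×ˢ S) := by
      rw [closure_prod_eq]; exact ⟨hx, hy⟩
    have hcl := map_mem_closure hcont hxy (fun p hp => hmain p.1 hp.1 p.2 hp.2)
    rwa [closure_closure] at hcl
  · exact (closure_minimal hSsub hWclosed).trans hWsub

end GelfandMazurAux

/-- The main Gelfand-Mazur argument, for a field.  Here the real scalar action on `A` is
the canonical one (`Module.complexToReal`) obtained by restricting the complex one. -/
theorem GelfandMazurAux.main
    (A : Type*) [Field A] [Algebra ℂ A]
    [UniformSpace A] [IsUniformAddGroup A] [CompleteSpace A] [IsTopologicalRing A]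
    [ContinuousSMul ℂ A]
    [LocallyConvexSpace ℝ A] [TopologicalSpace.MetrizableSpace A] :
    Function.Surjective (algebraMap ℂ A) := by
  classical
  -- real scalar multiplication is continuous
  have hrealsmul : ∀ (r : ℝ) (v : A), ((r : ℂ)) • v = r • v := fun r v =>
    Complex.coe_smul r v
  haveI : ContinuousSMul ℝ A := by
    constructor
    have h1 : Continuous fun p : ℝ × A => ((p.1 : ℂ)) • p.2 :=
      continuous_smul.comp ((Complex.continuous_ofReal.comp continuous_fst).prodMk
        continuous_snd)
    have h2 : (fun p : ℝ × A => p.1 • p.2) = fun p : ℝ × A => ((p.1 : ℂ)) • p.2 := by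
      funext p
      rw [hrealsmul]
    rw [h2]
    exact h1
  -- metrize the uniformity
  haveI : (uniformity A).IsCountablyGenerated := by
    rw [_root_.uniformity_eq_comap_nhds_zero A]
    infer_instance
  -- main argument
  intro z
  by_contra hcon
  push_neg at hcon
  have hz : ∀ c : ℂ, z - c • (1 : A) ≠ 0 := by
    intro c hc
    rw [sub_eq_zero] at hc
    exact hcon c (by rw [Algebra.algebraMap_eq_smul_one]; exact hc.symm)
  set R : ℂ → A := fun c => (z - c • (1 : A))⁻¹ with hR
  have hcontsub : Continuous fun c : ℂ => z - c • (1 : A) :=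
    continuous_const.sub (continuous_id.smul continuous_const)
  have hRtend : ∀ c₀ : ℂ, Tendsto R (𝓝 c₀) (𝓝 (R c₀)) := fun c₀ =>
    GelfandMazurAux.inv_tendsto' (hz c₀) hz (hcontsub.tendsto c₀)
  have hRcont : Continuous R := continuous_iff_continuousAt.2 hRtend
  -- a separating functional
  have hz0 : z ≠ 0 := by simpa using hz 0
  have hzi : z⁻¹ ≠ 0 := inv_ne_zero hz0
  obtain ⟨φ, hφ⟩ : ∃ f : A →L[ℝ] ℝ, f 0 < f z⁻¹ :=
    geometric_hahn_banach_point_point (Ne.symm hzi)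
  have hφpos : 0 < φ z⁻¹ := by simpa using hφ
  -- complexified functional
  set ψ : A → ℂ := fun v => (φ v : ℂ) - Complex.I * (φ (Complex.I • v) : ℂ) with hψ
  have hψcont : Continuous ψ := by
    apply Continuous.sub
    · exact Complex.continuous_ofReal.comp φ.continuous
    · exact continuous_const.mul
        (Complex.continuous_ofReal.comp (φ.continuous.comp (continuous_const_smul _)))
  have hψadd : ∀ v w : A, ψ (v + w) = ψ v + ψ w := by
    intro v w
    simp only [hψ, smul_add, map_add]
    push_cast
    ring
  have hψsub : ∀ v w : A, ψ (v - w) = ψ v - ψ w := by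
    intro v w
    simp only [hψ, smul_sub, map_sub]
    push_cast
    ring
  have hψI : ∀ v : A, ψ (Complex.I • v) = Complex.I * ψ v := by
    intro v
    have h2 : Complex.I • Complex.I • v = -v := by
      rw [smul_smul, Complex.I_mul_I, neg_one_smul]
    simp only [hψ, h2, map_neg]
    push_cast
    linear_combination ((φ (Complex.I • v) : ℂ)) * Complex.I_sq
  have hψr : ∀ (r : ℝ) (v : A), ψ (r • v) = (r : ℂ) * ψ v := by
    intro r v
    have h1 : Complex.I • (r • v) = r • (Complex.I • v) := by
      rw [← hrealsmul r v, ← hrealsmul r (Complex.I • v), smul_smul, smul_smul, mul_comm]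
    have e1 : φ (r • v) = r * φ v := by rw [map_smul, smul_eq_mul]
    have e2 : φ (r • Complex.I • v) = r * φ (Complex.I • v) := by rw [map_smul, smul_eq_mul]
    simp only [hψ, h1, e1, e2]
    push_cast
    ring
  have hψsmul : ∀ (c : ℂ) (v : A), ψ (c • v) = c * ψ v := by
    intro c v
    have hdecomp : c • v = (c.re : ℝ) • v + (c.im : ℝ) • (Complex.I • v) := by
      rw [← hrealsmul c.re v, ← hrealsmul c.im (Complex.I • v), smul_smul, ← add_smul,
        Complex.re_add_im]
    rw [hdecomp, hψadd, hψr, hψr, hψI]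
    conv_rhs => rw [← Complex.re_add_im c]
    ring
  -- the entire function
  set g : ℂ → ℂ := fun c => ψ (R c) with hg
  have hgcont : Continuous g := hψcont.comp hRcont
  have hgdiff : Differentiable ℂ g := by
    intro c₀
    have hslope : ∀ c : ℂ, c ≠ c₀ → slope g c₀ c = ψ (R c * R c₀) := by
      intro c hc
      have hres : R c - R c₀ = (c - c₀) • (R c * R c₀) := by
        have hvu : (z - c₀ • (1 : A)) - (z - c • (1 : A)) = (c - c₀) • (1 : A) := by
          rw [sub_smul]; abel
        have h1 : R c - R c₀ =
            R c * ((z - c₀ • (1 : A)) - (z - c • (1 : A))) * R c₀ := by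
          show (z - c • (1 : A))⁻¹ - (z - c₀ • (1 : A))⁻¹ = _
          calc (z - c • (1 : A))⁻¹ - (z - c₀ • (1 : A))⁻¹
              = (z - c • (1 : A))⁻¹ * ((z - c₀ • (1 : A)) * (z - c₀ • (1 : A))⁻¹)
                - ((z - c • (1 : A))⁻¹ * (z - c • (1 : A))) * (z - c₀ • (1 : A))⁻¹ := by
                rw [mul_inv_cancel₀ (hz c₀), inv_mul_cancel₀ (hz c), mul_one, one_mul]
          _ = (z - c • (1 : A))⁻¹ * ((z - c₀ • (1 : A)) - (z - c • (1 : A)))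
                * (z - c₀ • (1 : A))⁻¹ := by ring
        rw [h1, hvu, mul_smul_comm, smul_mul_assoc, mul_one]
      rw [slope_def_field, hg]
      rw [show ψ (R c) - ψ (R c₀) = ψ (R c - R c₀) from (hψsub _ _).symm, hres, hψsmul]
      rw [mul_comm, mul_div_assoc, div_self (sub_ne_zero.2 hc), mul_one]
    have htends : Tendsto (fun c => ψ (R c * R c₀)) (𝓝[≠] c₀) (𝓝 (ψ (R c₀ * R c₀))) :=
      ((hψcont.comp (hRcont.mul continuous_const)).tendsto c₀).mono_left nhdsWithin_le_nhds
    have hder : HasDerivAt g (ψ (R c₀ * R c₀)) c₀ := by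
      rw [hasDerivAt_iff_tendsto_slope]
      refine htends.congr' ?_
      filter_upwards [self_mem_nhdsWithin] with c hc
      exact (hslope c hc).symm
    exact hder.differentiableAt
  -- behavior at infinity
  have hFne : ∀ w : ℂ, (1 : A) - w • z ≠ 0 := by
    intro w h0
    rcases eq_or_ne w 0 with rfl | hw
    · simp at h0
    · apply hz w⁻¹
      have h1 : z - w⁻¹ • (1 : A) = (-w⁻¹) • ((1 : A) - w • z) := by
        rw [smul_sub, smul_smul, neg_mul, inv_mul_cancel₀ hw, neg_one_smul, sub_neg_eq_add,
          neg_smul]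
        abel
      rw [h1, h0, smul_zero]
  set F : ℂ → A := fun w => ((1 : A) - w • z)⁻¹ with hF
  have hFcont : Continuous F := by
    refine continuous_iff_continuousAt.2 fun w₀ => ?_
    refine GelfandMazurAux.inv_tendsto' (hFne w₀) hFne ?_
    exact (continuous_const.sub (continuous_id.smul continuous_const)).tendsto w₀
  have hsmulinv : ∀ (sc : ℂ) (v : A), (sc • v)⁻¹ = sc⁻¹ • v⁻¹ := by
    intro sc v
    rw [Algebra.smul_def, Algebra.smul_def, mul_inv, map_inv₀]
  have hgid : ∀ c : ℂ, c ≠ 0 → g c = -(c⁻¹ * ψ (F c⁻¹)) := by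
    intro c hc
    have h1 : z - c • (1 : A) = (-c) • ((1 : A) - c⁻¹ • z) := by
      rw [smul_sub, smul_smul, neg_mul, mul_inv_cancel₀ hc, neg_one_smul, sub_neg_eq_add,
        neg_smul]
      abel
    have h2 : R c = (-c)⁻¹ • F c⁻¹ := by
      rw [hR]
      show (z - c • (1 : A))⁻¹ = _
      rw [h1, hsmulinv]
    rw [hg]
    show ψ (R c) = _
    rw [h2, hψsmul]
    rw [inv_neg]
    ring
  -- boundedness
  have hψF0 : ContinuousAt (fun w : ℂ => ψ (F w)) 0 := (hψcont.comp hFcont).continuousAt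
  obtain ⟨δ, hδpos, hδ⟩ : ∃ δ > 0, ∀ w : ℂ, dist w 0 < δ → ‖ψ (F w)‖ ≤ ‖ψ (F 0)‖ + 1 := by
    have h1 := Metric.continuousAt_iff.1 hψF0 1 one_pos
    obtain ⟨δ, hδpos, hδ⟩ := h1
    refine ⟨δ, hδpos, fun w hw => ?_⟩
    have h2 := hδ hw
    have h3 : ‖ψ (F w) - ψ (F 0)‖ < 1 := by
      rw [← dist_eq_norm]
      exact h2
    calc ‖ψ (F w)‖ = ‖ψ (F 0) + (ψ (F w) - ψ (F 0))‖ := by ring_nf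
    _ ≤ ‖ψ (F 0)‖ + ‖ψ (F w) - ψ (F 0)‖ := norm_add_le _ _
    _ ≤ ‖ψ (F 0)‖ + 1 := by linarith
  set M : ℝ := max (2 / δ) 1 with hM
  have hMpos : 0 < M := lt_of_lt_of_le one_pos (le_max_right _ _)
  obtain ⟨C₀, hC₀⟩ : ∃ C₀, ∀ c ∈ Metric.closedBall (0 : ℂ) M, ‖g c‖ ≤ C₀ :=
    (isCompact_closedBall (0 : ℂ) M).exists_bound_of_continuousOn hgcont.continuousOn
  have hout : ∀ c : ℂ, M ≤ ‖c‖ → ‖g c‖ ≤ ‖ψ (F 0)‖ + 1 := by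
    intro c hcM
    have hc0 : c ≠ 0 := by
      intro h
      rw [h, norm_zero] at hcM
      linarith
    have hinv_small : dist c⁻¹ 0 < δ := by
      rw [dist_zero_right, norm_inv]
      have h1 : 2 / δ ≤ ‖c‖ := le_trans (le_max_left _ _) hcM
      have h2 : 0 < ‖c‖ := norm_pos_iff.2 hc0
      rw [inv_lt_comm₀ h2 hδpos]
      have hδi : (0 : ℝ) < δ⁻¹ := inv_pos.2 hδpos
      have h12 : δ⁻¹ < 2 / δ := by
        rw [div_eq_mul_inv]
        linarith
      exact lt_of_lt_of_le h12 h1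
    have h3 := hδ c⁻¹ hinv_small
    rw [hgid c hc0]
    rw [norm_neg, norm_mul, norm_inv]
    have h4 : ‖c‖⁻¹ ≤ 1 := by
      rw [inv_le_one_iff₀]
      right
      exact le_trans (le_max_right _ _) hcM
    calc ‖c‖⁻¹ * ‖ψ (F c⁻¹)‖ ≤ 1 * (‖ψ (F 0)‖ + 1) := by
          apply mul_le_mul h4 h3 (norm_nonneg _)
          norm_num
    _ = ‖ψ (F 0)‖ + 1 := one_mul _
  have hbdd : Bornology.IsBounded (range g) := by
    rw [isBounded_iff_forall_norm_le]
    refine ⟨max C₀ (‖ψ (F 0)‖ + 1), ?_⟩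
    rintro y ⟨c, rfl⟩
    rcases le_or_gt ‖c‖ M with h | h
    · exact le_trans (hC₀ c (by simpa [Metric.mem_closedBall, Complex.dist_eq] using h))
        (le_max_left _ _)
    · exact le_trans (hout c h.le) (le_max_right _ _)
  -- Liouville
  have hconst := hgdiff.apply_eq_apply_of_bounded hbdd
  -- the constant is zero
  have hg0 : g 0 = 0 := by
    have hlim : Tendsto (fun nn : ℕ => g ((nn : ℂ) + 1)) atTop (𝓝 0) := by
      have hnorm : ∀ᶠ nn : ℕ in atTop, ‖g ((nn : ℂ) + 1)‖ ≤ (‖ψ (F 0)‖ + 1) * (1 / ((nn : ℝ) + 1)) := by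
        filter_upwards [eventually_ge_atTop (Nat.ceil (1 / δ))] with nn hnn
        have hcast : ((nn : ℂ) + 1) = ((nn + 1 : ℕ) : ℂ) := by push_cast; ring
        have hcne : ((nn : ℂ) + 1) ≠ 0 := by
          rw [hcast]
          exact_mod_cast Nat.succ_ne_zero nn
        have hnormc : ‖((nn : ℂ) + 1)‖ = (nn : ℝ) + 1 := by
          rw [hcast, Complex.norm_natCast]
          push_cast
          ring
        have hsmall : dist ((nn : ℂ) + 1)⁻¹ 0 < δ := by
          rw [dist_zero_right, norm_inv, hnormc]
          have h1 : (1 : ℝ) / δ ≤ nn := le_trans (Nat.le_ceil _) (by exact_mod_cast hnn)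
          have h2 : (0 : ℝ) < (nn : ℝ) + 1 := by positivity
          rw [inv_lt_comm₀ h2 hδpos, inv_eq_one_div]
          calc 1 / δ ≤ (nn : ℝ) := h1
          _ < (nn : ℝ) + 1 := by linarith
        rw [hgid _ hcne, norm_neg, norm_mul, norm_inv, hnormc]
        have h3 := hδ _ hsmall
        calc ((nn : ℝ) + 1)⁻¹ * ‖ψ (F ((nn : ℂ) + 1)⁻¹)‖
            ≤ ((nn : ℝ) + 1)⁻¹ * (‖ψ (F 0)‖ + 1) := by
              apply mul_le_mul_of_nonneg_left h3
              positivity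
        _ = (‖ψ (F 0)‖ + 1) * (1 / ((nn : ℝ) + 1)) := by ring
      refine squeeze_zero_norm' hnorm ?_
      have := tendsto_one_div_add_atTop_nhds_zero_nat.const_mul (‖ψ (F 0)‖ + 1)
      simpa using this
    have hconst2 : Tendsto (fun _ : ℕ => g 0) atTop (𝓝 0) := by
      refine hlim.congr fun nn => ?_
      exact hconst _ _
    exact tendsto_nhds_unique tendsto_const_nhds hconst2
  -- contradiction
  have hψz : ψ z⁻¹ = 0 := by
    have hR0 : R 0 = z⁻¹ := by rw [hR]; simp
    rw [hg] at hg0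
    rw [← hR0]
    exact hg0
  have hre : φ z⁻¹ = 0 := by
    have := congrArg Complex.re hψz
    simpa [hψ, Complex.sub_re, Complex.mul_re, Complex.I_re, Complex.I_im,
      Complex.ofReal_re, Complex.ofReal_im] using this
  rw [hre] at hφpos
  exact lt_irrefl 0 hφpos


/-- The Gelfand–Mazur theorem for Fréchet algebras: a commutative unital Fréchet
algebra over `ℂ` (complete metrizable locally convex topological algebra) in which
every nonzero element is invertible is isomorphic to `ℂ`, i.e. every element is a
complex scalar multiple of the identity. -/
theorem gelfand_mazur_frechet
    (A : Type*) [CommRing A] [Nontrivial A] [Algebra ℂ A]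
    [UniformSpace A] [IsUniformAddGroup A] [CompleteSpace A] [IsTopologicalRing A]
    [ContinuousSMul ℂ A] [Module ℝ A] [IsScalarTower ℝ ℂ A]
    [LocallyConvexSpace ℝ A] [TopologicalSpace.MetrizableSpace A]
    (hinv : ∀ a : A, a ≠ 0 → IsUnit a) :
    Function.Surjective (algebraMap ℂ A) := by
  -- transport the local convexity to the canonical restricted-scalar `ℝ`-module structure
  have hrat : ∀ U ∈ 𝓝 (0 : A), ∃ S ∈ 𝓝 (0 : A),
      (∀ u ∈ S, ∀ v ∈ S, ∀ q : ℚ, 0 ≤ q → q ≤ 1 →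
        ((q : ℂ)) • u + (((1 - q : ℚ) : ℂ)) • v ∈ S) ∧ S ⊆ U := by
    intro U hU
    obtain ⟨S, hSmem, hSconv, hSsub⟩ :=
      (@locallyConvexSpace_iff_exists_convex_subset_zero ℝ A _ _ _ ‹Module ℝ A› _ _).1
        ‹LocallyConvexSpace ℝ A› U hU
    refine ⟨S, hSmem, fun u hu v hv q hq0 hq1 => ?_, hSsub⟩
    have e1 := @map_ratCast_smul A A _ _ (A →+ A) _ _ (AddMonoidHom.id A) ℂ ℝ _ _ _
      ‹Module ℝ A› q u
    have e2 := @map_ratCast_smul A A _ _ (A →+ A) _ _ (AddMonoidHom.id A) ℂ ℝ _ _ _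
      ‹Module ℝ A› (1 - q) v
    simp only [AddMonoidHom.id_apply] at e1 e2
    rw [e1, e2]
    have h3 : (((1 - q : ℚ) : ℝ)) = 1 - ((q : ℝ)) := by push_cast; ring
    rw [h3]
    refine hSconv hu hv ?_ ?_ (by ring)
    · exact_mod_cast hq0
    · have h4 : (q : ℝ) ≤ 1 := by exact_mod_cast hq1
      linarith
  have hlcs := GelfandMazurAux.lcs_canonical A hrat
  letI F : Field A := IsField.toField
    { exists_pair_ne := exists_pair_ne A
      mul_comm := mul_comm
      mul_inv_cancel := fun {a} ha => (hinv a ha).exists_right_inv }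
  exact @GelfandMazurAux.main A F ‹Algebra ℂ A› ‹UniformSpace A› ‹IsUniformAddGroup A›
    ‹CompleteSpace A› ‹IsTopologicalRing A› ‹ContinuousSMul ℂ A›
    hlcs ‹TopologicalSpace.MetrizableSpace A›
end

section
/- There exists a maximal ideal of the algebra C(ℝ) of continuous complex-valued functions on ℝ, with the topology of uniform convergence on compact sets, that is not closed. -/
open Filter Topology

private noncomputable def bumpFn (n : ℕ) : C(ℝ, ℂ) :=
  ⟨fun x => ((max 0 (min 1 ((n : ℝ) + 1 - |x|)) : ℝ) : ℂ), by
    apply Complex.continuous_ofReal.comp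
    exact (continuous_const.max ((continuous_const.min
      (continuous_const.sub continuous_abs))))⟩

private lemma bumpFn_hcs (n : ℕ) : HasCompactSupport ⇑(bumpFn n) := by
  apply HasCompactSupport.intro (isCompact_Icc (a := -((n : ℝ) + 1)) (b := (n : ℝ) + 1))
  intro x hx
  have : (n : ℝ) + 1 ≤ |x| := by
    by_contra h
    push_neg at h
    exact hx ⟨(abs_lt.mp h).1.le, (abs_lt.mp h).2.le⟩
  simp only [bumpFn, ContinuousMap.coe_mk]
  have : min 1 ((n : ℝ) + 1 - |x|) ≤ 0 := le_trans (min_le_right _ _) (by linarith)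
  rw [max_eq_left this]
  simp

private lemma bumpFn_eq_one {n : ℕ} {x : ℝ} (hx : |x| ≤ n) : bumpFn n x = 1 := by
  simp only [bumpFn, ContinuousMap.coe_mk]
  have h1 : (1 : ℝ) ≤ (n : ℝ) + 1 - |x| := by linarith
  rw [min_eq_left h1, max_eq_right zero_le_one]
  simp

private noncomputable def csIdeal : Ideal C(ℝ, ℂ) where
  carrier := {f | HasCompactSupport ⇑f}
  add_mem' hf hg := by exact HasCompactSupport.add hf hg
  zero_mem' := by
    change HasCompactSupport (0 : ℝ → ℂ)
    simpa using HasCompactSupport.zero (α := ℝ) (β := ℂ)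
  smul_mem' c f hf := by
    change HasCompactSupport ⇑(c * f)
    exact HasCompactSupport.mul_left hf

private lemma csIdeal_ne_top : csIdeal ≠ ⊤ := by
  intro h
  have h1 : (1 : C(ℝ, ℂ)) ∈ csIdeal := h ▸ Submodule.mem_top
  have : HasCompactSupport (fun _ : ℝ => (1 : ℂ)) := h1
  have hc : IsCompact (Set.univ : Set ℝ) := by
    have := this
    rw [HasCompactSupport] at this
    have ht : tsupport (fun _ : ℝ => (1 : ℂ)) = Set.univ := by
      rw [tsupport, Function.support_const one_ne_zero, closure_univ]
    rwa [ht] at this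
  exact (not_compactSpace_iff.mpr inferInstance) (isCompact_univ_iff.mp hc)

private lemma csIdeal_dense : Dense (csIdeal : Set C(ℝ, ℂ)) := by
  intro f
  have key : Tendsto (fun n : ℕ => f * bumpFn n) atTop (𝓝 f) := by
    rw [ContinuousMap.tendsto_iff_forall_isCompact_tendstoUniformlyOn]
    intro K hK
    obtain ⟨n₀, hn₀⟩ : ∃ n₀ : ℕ, ∀ x ∈ K, |x| ≤ n₀ := by
      obtain ⟨r, hr⟩ := hK.isBounded.subset_closedBall 0
      obtain ⟨n₀, hn₀⟩ := exists_nat_ge r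
      exact ⟨n₀, fun x hx => le_trans (by simpa using hr hx) hn₀⟩
    rw [Metric.tendstoUniformlyOn_iff]
    intro ε hε
    filter_upwards [eventually_ge_atTop n₀] with n hn x hx
    have hb : bumpFn n x = 1 := bumpFn_eq_one (le_trans (hn₀ x hx) (by exact_mod_cast hn))
    simp [hb, hε]
  refine mem_closure_of_tendsto key (Eventually.of_forall fun n => ?_)
  change HasCompactSupport ⇑(f * bumpFn n)
  exact (bumpFn_hcs n).mul_left

/-- There is a maximal ideal of `C(ℝ, ℂ)` (continuous complex-valued functions on `ℝ`
with the compact-open topology, i.e. uniform convergence on compact sets) that is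
not closed. -/
theorem exists_maximal_ideal_not_closed_C_real :
    ∃ I : Ideal C(ℝ, ℂ), I.IsMaximal ∧ ¬ IsClosed (I : Set C(ℝ, ℂ)) := by
  obtain ⟨I, hI, hle⟩ := Ideal.exists_le_maximal csIdeal csIdeal_ne_top
  refine ⟨I, hI, fun hcl => ?_⟩
  have hdense : Dense (I : Set C(ℝ, ℂ)) := csIdeal_dense.mono hle
  have huniv : (I : Set C(ℝ, ℂ)) = Set.univ := hcl.closure_eq ▸ hdense.closure_eq
  have h1 : (1 : C(ℝ, ℂ)) ∈ (I : Set C(ℝ, ℂ)) := huniv ▸ Set.mem_univ _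
  exact hI.ne_top ((Ideal.eq_top_iff_one I).mpr h1)
end

section
/- Let A be a Banach algebra over ℂ with a bounded left approximate identity, and let E be a left Banach A-module. Then for every x in the closure of A·E and every ε > 0, there exist a ∈ A and y ∈ E such that x = a·y and ‖x − y‖ < ε. -/
open scoped Topology
open Filter

set_option maxHeartbeats 1000000 in
/-- Cohen's factorization theorem: if `A` is a Banach algebra over `ℂ` with a bounded
left approximate identity `(e_i)` and `E` is a left Banach `A`-module (the module
action being a continuous bilinear associative action `σ`), then every `x` in the
closure of `A • E` factors as `x = a • y` with `y` arbitrarily close to `x`. -/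
theorem cohen_factorization
    (A : Type*) [NonUnitalNormedRing A] [NormedSpace ℂ A] [SMulCommClass ℂ A A]
    [IsScalarTower ℂ A A] [CompleteSpace A]
    (E : Type*) [NormedAddCommGroup E] [NormedSpace ℂ E] [CompleteSpace E]
    (σ : A →L[ℂ] E →L[ℂ] E) (hσ : ∀ a b : A, σ (a * b) = (σ a).comp (σ b))
    (ι : Type*) (l : Filter ι) [l.NeBot] (e : ι → A)
    (hbdd : ∃ M : ℝ, ∀ i, ‖e i‖ ≤ M)
    (hai : ∀ a : A, Tendsto (fun i => e i * a) l (𝓝 a)) :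
    ∀ x ∈ closure {y : E | ∃ (a : A) (z : E), σ a z = y}, ∀ ε > (0 : ℝ),
      ∃ (a : A) (y : E), x = σ a y ∧ ‖x - y‖ < ε := by
  
  intro x hx ε hε
  obtain ⟨M, hM⟩ := hbdd
  have hM0 : 0 ≤ M := le_trans (norm_nonneg _) (hM (nonempty_of_neBot l).some)
  -- x is a limit of σ (e i) x
  have hex : Tendsto (fun i => σ (e i) x) l (𝓝 x) := by
    rw [Metric.tendsto_nhds]
    intro δ hδ
    have hden : (0:ℝ) < ‖σ‖ * M + 1 := by positivity
    obtain ⟨z, hzS, hxz⟩ := Metric.mem_closure_iff.mp hx (δ / (2 * (‖σ‖ * M + 1)))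
      (by positivity)
    obtain ⟨a, w, rfl⟩ := hzS
    have h1 : Tendsto (fun i => σ (e i * a) w) l (𝓝 (σ a w)) :=
      ((((ContinuousLinearMap.apply ℂ E w).comp σ).continuous.tendsto a).comp (hai a))
    have h2 := Metric.tendsto_nhds.mp h1 (δ/2) (by positivity)
    filter_upwards [h2] with i hi
    have key : σ (e i) x - x
        = σ (e i) (x - σ a w) + (σ (e i * a) w - σ a w) + (σ a w - x) := by
      rw [hσ]
      simp only [ContinuousLinearMap.coe_comp', Function.comp_apply, ContinuousLinearMap.comp_apply, map_sub]
      abel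
    rw [dist_eq_norm, key]
    have hb1 : ‖σ (e i) (x - σ a w)‖ ≤ ‖σ‖ * M * ‖x - σ a w‖ := by
      refine ((σ (e i)).le_opNorm _).trans ?_
      gcongr
      exact (σ.le_opNorm _).trans (mul_le_mul_of_nonneg_left (hM i) (norm_nonneg σ))
    have hxz' : ‖x - σ a w‖ < δ / (2 * (‖σ‖ * M + 1)) := by
      rwa [dist_eq_norm] at hxz
    have hzx : ‖σ a w - x‖ = ‖x - σ a w‖ := by rw [norm_sub_rev]
    have hi' : ‖σ (e i * a) w - σ a w‖ < δ/2 := by rwa [dist_eq_norm] at hi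
    calc ‖_ + _ + _‖ ≤ ‖σ (e i) (x - σ a w)‖ + ‖σ (e i * a) w - σ a w‖ + ‖σ a w - x‖ :=
          norm_add₃_le
      _ < ‖σ‖ * M * ‖x - σ a w‖ + δ/2 + ‖x - σ a w‖ := by rw [hzx]; linarith
      _ ≤ (‖σ‖ * M + 1) * (δ / (2 * (‖σ‖ * M + 1))) + δ/2 := by nlinarith [norm_nonneg (x - σ a w), hxz'.le, mul_nonneg (norm_nonneg σ) hM0]
      _ = δ := by field_simp; ring
  -- the unitization with L¹ norm
  set 𝔄 := WithLp 1 (Unitization ℂ A) with h𝔄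
  let eq𝔄 := WithLp.equiv 1 (Unitization ℂ A)
  let σ' : A →ₙₐ[ℂ] (E →L[ℂ] E) :=
    { toFun := σ
      map_smul' := map_smul σ
      map_zero' := map_zero σ
      map_add' := map_add σ
      map_mul' := hσ }
  let π : 𝔄 →ₐ[ℂ] (E →L[ℂ] E) :=
    (Unitization.lift σ').comp (WithLp.unitizationAlgEquiv (𝕜 := ℂ) (A := A) ℂ).toAlgHom
  have hπ : ∀ z : 𝔄, π z = (eq𝔄 z).fst • (1 : E →L[ℂ] E) + σ (eq𝔄 z).snd := by
    intro z
    show algebraMap ℂ (E →L[ℂ] E) _ + σ' _ = _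
    rw [Algebra.algebraMap_eq_smul_one]; rfl
  set Cσ : ℝ := max 1 ‖σ‖ with hCσ
  have hCσ1 : (1:ℝ) ≤ Cσ := le_max_left _ _
  have hCσσ : ‖σ‖ ≤ Cσ := le_max_right _ _
  have hCσ0 : (0:ℝ) < Cσ := lt_of_lt_of_le one_pos hCσ1
  have hπnorm : ∀ z : 𝔄, ‖π z‖ ≤ Cσ * ‖z‖ := by
    intro z
    rw [hπ z, WithLp.unitization_norm_def]
    have h1 := norm_smul_le ((eq𝔄 z).fst) (1 : E →L[ℂ] E)
    have h1' : ‖(1 : E →L[ℂ] E)‖ ≤ 1 := ContinuousLinearMap.norm_id_le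
    have h2 : ‖σ (eq𝔄 z).snd‖ ≤ ‖σ‖ * ‖(eq𝔄 z).snd‖ := (σ.le_opNorm _ : _)
    have h3 := norm_add_le ((eq𝔄 z).fst • (1 : E →L[ℂ] E)) (σ (eq𝔄 z).snd)
    have hf : (0:ℝ) ≤ ‖(eq𝔄 z).fst‖ := norm_nonneg _
    have hs : (0:ℝ) ≤ ‖(eq𝔄 z).snd‖ := norm_nonneg _
    show ‖(eq𝔄 z).fst • (1 : E →L[ℂ] E) + σ (eq𝔄 z).snd‖ ≤ Cσ * (‖(eq𝔄 z).fst‖ + ‖(eq𝔄 z).snd‖)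
    nlinarith [le_max_left 1 ‖σ‖, le_max_right 1 ‖σ‖, norm_nonneg ((eq𝔄 z).fst • (1 : E →L[ℂ] E))]
  -- embedding of A
  let j : A → 𝔄 := fun a => eq𝔄.symm (Unitization.inr a)
  have hjnorm : ∀ a : A, ‖j a‖ = ‖a‖ := fun a => WithLp.unitization_norm_inr a
  have hone : ‖(1:𝔄)‖ = 1 := by
    rw [WithLp.unitization_norm_def]
    show ‖(1 : Unitization ℂ A).fst‖ + ‖(1 : Unitization ℂ A).snd‖ = 1
    simp
  have hπj : ∀ a : A, π (j a) = σ a := by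
    intro a
    rw [hπ]
    show (Unitization.inr a : Unitization ℂ A).fst • _ + σ (Unitization.inr a : Unitization ℂ A).snd = _
    simp
  -- the constant d
  set K : ℝ := 1 + M + ‖σ‖ * M with hK
  have hK1 : (1:ℝ) ≤ K := by nlinarith [norm_nonneg σ]
  set d : ℝ := (2*K)⁻¹ with hd
  have hd0 : 0 < d := by positivity
  have hdM : d * (1 + M) ≤ 1/2 := by
    rw [hd, inv_mul_le_iff₀ (by positivity)]
    nlinarith [norm_nonneg σ]
  have hdσ : d * (1 + ‖σ‖ * M) ≤ 1/2 := by
    rw [hd, inv_mul_le_iff₀ (by positivity)]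
    nlinarith [norm_nonneg σ]
  have hd1 : d < 1 := by nlinarith
  have hdlt : 0 < 1 - d := by linarith
  have hd1' : 1 - d < 1 := by linarith
  -- the perturbations
  let t : ι → 𝔄 := fun i => (d:ℂ) • ((1:𝔄) - j (e i))
  have hnorm_t : ∀ i, ‖t i‖ ≤ 1/2 := by
    intro i
    refine le_trans (norm_smul_le _ _) (le_trans ?_ hdM)
    rw [Complex.norm_real, Real.norm_of_nonneg hd0.le]
    gcongr
    refine (norm_sub_le _ _).trans ?_
    rw [hone, hjnorm]
    gcongr
    exact hM i
  have hnorm_t1 : ∀ i, ‖t i‖ < 1 := fun i => lt_of_le_of_lt (hnorm_t i) (by norm_num)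
  let b : ι → 𝔄ˣ := fun i => Units.oneSub (t i) (hnorm_t1 i)
  -- operator version S of t
  have hS : ∀ i, π (t i) = (d:ℂ) • ((1 : E →L[ℂ] E) - σ (e i)) := by
    intro i
    rw [map_smul, map_sub, map_one, hπj]
  have hSnorm : ∀ i, ‖π (t i)‖ ≤ 1/2 := by
    intro i
    rw [hS i]
    have hsm := norm_smul_le ((d:ℂ)) ((1 : E →L[ℂ] E) - σ (e i))
    refine le_trans hsm (le_trans ?_ hdσ)
    rw [Complex.norm_real, Real.norm_of_nonneg hd0.le]
    gcongr
    refine (norm_sub_le _ _).trans ?_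
    have h2 : ‖σ (e i)‖ ≤ ‖σ‖ * M :=
      (σ.le_opNorm _).trans (mul_le_mul_of_nonneg_left (hM i) (norm_nonneg σ))
    have h1 : ‖(1 : E →L[ℂ] E)‖ ≤ 1 := ContinuousLinearMap.norm_id_le
    linarith
  -- π as continuous linear map
  let Lπ : 𝔄 →L[ℂ] (E →L[ℂ] E) := LinearMap.mkContinuous π.toLinearMap Cσ hπnorm
  have hLπ : ∀ z : 𝔄, Lπ z = π z := fun z => rfl
  -- key estimate for the inverse of b i applied to x
  have hbinv : ∀ i, ‖π ((b i)⁻¹ : 𝔄ˣ) x - x‖ ≤ 2 * d * ‖x - σ (e i) x‖ := by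
    intro i
    have hsum𝔄 : Summable (fun k : ℕ => (t i)^k) :=
      summable_geometric_of_norm_lt_one (hnorm_t1 i)
    have hval : ((b i)⁻¹ : 𝔄ˣ).val = ∑' k : ℕ, (t i)^k := rfl
    have hπsum : π ((b i)⁻¹ : 𝔄ˣ).val = ∑' k : ℕ, (π (t i))^k := by
      rw [hval, ← hLπ, ContinuousLinearMap.map_tsum _ hsum𝔄]
      congr 1; funext k; rw [hLπ, map_pow]
    have hsumS : Summable (fun k : ℕ => (π (t i))^k) :=
      summable_geometric_of_norm_lt_one (lt_of_le_of_lt (hSnorm i) (by norm_num))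
    have happ : π ((b i)⁻¹ : 𝔄ˣ).val x = ∑' k : ℕ, ((π (t i))^k) x := by
      rw [hπsum]
      exact ContinuousLinearMap.map_tsum (ContinuousLinearMap.apply ℂ E x) hsumS
    set S := π (t i) with hSdef
    have hSx : S x = (d:ℂ) • (x - σ (e i) x) := by
      rw [hSdef, hS i]
      simp [ContinuousLinearMap.smul_apply, ContinuousLinearMap.sub_apply]
    have hSxnorm : ‖S x‖ = d * ‖x - σ (e i) x‖ := by
      rw [hSx, norm_smul, Complex.norm_real, Real.norm_of_nonneg hd0.le]
    have hsumSx : Summable (fun k : ℕ => (S^k) x) :=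
      hsumS.map (ContinuousLinearMap.apply ℂ E x) (ContinuousLinearMap.apply ℂ E x).continuous
    have hsplit : (∑' k : ℕ, (S^k) x) = x + ∑' k : ℕ, (S^(k+1)) x := by
      rw [hsumSx.tsum_eq_zero_add]
      simp
    have hpow : ∀ k : ℕ, ‖S^k‖ ≤ (1/2:ℝ)^k := by
      intro k
      induction k with
      | zero => rw [pow_zero, pow_zero]; exact ContinuousLinearMap.norm_id_le
      | succ m ih =>
        rw [pow_succ, pow_succ]
        refine (norm_mul_le _ _).trans ?_
        have h0 : (0:ℝ) ≤ (1/2)^m := by positivity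
        nlinarith [norm_nonneg (S^m), hSnorm i, norm_nonneg S]
    have hterm : ∀ k : ℕ, ‖(S^(k+1)) x‖ ≤ (1/2)^k * (d * ‖x - σ (e i) x‖) := by
      intro k
      have h1 : (S^(k+1)) x = (S^k) (S x) := by
        rw [pow_succ, ContinuousLinearMap.mul_apply]
      rw [h1, ← hSxnorm]
      exact ((S^k).le_opNorm _).trans (mul_le_mul_of_nonneg_right (hpow k) (norm_nonneg _))
    have hgeom : HasSum (fun k : ℕ => (1/2:ℝ)^k * (d * ‖x - σ (e i) x‖))
        (2 * (d * ‖x - σ (e i) x‖)) := by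
      have := (hasSum_geometric_of_lt_one (by norm_num : (0:ℝ) ≤ 1/2)
        (by norm_num : (1/2:ℝ) < 1)).mul_right (d * ‖x - σ (e i) x‖)
      rw [show (1 - 1/2 : ℝ)⁻¹ = 2 by norm_num] at this
      exact this
    have htail : ‖∑' k : ℕ, (S^(k+1)) x‖ ≤ 2 * (d * ‖x - σ (e i) x‖) :=
      tsum_of_norm_bounded hgeom hterm
    have : π ((b i)⁻¹ : 𝔄ˣ) x - x = ∑' k : ℕ, (S^(k+1)) x := by
      have : π ((b i)⁻¹ : 𝔄ˣ).val x = x + ∑' k : ℕ, (S^(k+1)) x := by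
        rw [happ, hsplit]
      rw [this]; abel
    rw [this]
    calc ‖∑' k : ℕ, (S^(k+1)) x‖ ≤ 2 * (d * ‖x - σ (e i) x‖) := htail
      _ = 2 * d * ‖x - σ (e i) x‖ := by ring
  -- the recursive choice
  have key : ∀ (n : ℕ) (u : 𝔄ˣ), ∃ i : ι,
      ‖e i * (eq𝔄 u.val).snd - (eq𝔄 u.val).snd‖ < (1-d)^n ∧
      ‖x - σ (e i) x‖ < ((ε/4)*(1/2)^n) / (Cσ * ‖(u⁻¹).val‖ * (2*d) + 1) := by
    intro n u
    have hδ0 : 0 < ((ε/4)*(1/2)^n) / (Cσ * ‖(u⁻¹).val‖ * (2*d) + 1) := by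
      apply div_pos
      · have : (0:ℝ) < (1/2)^n := by positivity
        nlinarith
      · have h1 : (0:ℝ) ≤ Cσ * ‖(u⁻¹).val‖ * (2*d) :=
          mul_nonneg (mul_nonneg hCσ0.le (norm_nonneg _)) (by linarith)
        linarith
    have h1 := Metric.tendsto_nhds.mp (hai (eq𝔄 u.val).snd) ((1-d)^n) (pow_pos hdlt n)
    have h2 := Metric.tendsto_nhds.mp hex _ hδ0
    refine ((h1.and h2).exists).imp fun i hi => ⟨?_, ?_⟩
    · rw [← dist_eq_norm]; exact hi.1
    · rw [← dist_eq_norm, dist_comm]; exact hi.2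
  choose pick hp1 hp2 using key
  let u : ℕ → 𝔄ˣ := fun n => Nat.rec 1 (fun m v => b (pick m v) * v) n
  have hus : ∀ n, u (n+1) = b (pick n (u n)) * u n := fun n => rfl
  -- the first components
  have hfst : ∀ n, (eq𝔄 (u n).val).fst = (((1-d : ℝ) : ℂ))^n := by
    intro n
    induction n with
    | zero =>
      show (1 : Unitization ℂ A).fst = _
      simp
    | succ m ih =>
      rw [hus m, Units.val_mul]
      show ((eq𝔄 (b (pick m (u m))).val) * (eq𝔄 (u m).val)).fst = _
      rw [Unitization.fst_mul, ih]
      have hb : (eq𝔄 (b (pick m (u m))).val).fst = ((1-d : ℝ) : ℂ) := by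
        show ((1 : Unitization ℂ A) - ((d:ℂ) • ((1 : Unitization ℂ A) - Unitization.inr (e (pick m (u m)))))).fst = _
        push_cast
        simp [sub_eq_add_neg]
      rw [hb, pow_succ]
      ring
  -- Cauchy property of u
  have hdiff : ∀ n, ‖(u (n+1)).val - (u n).val‖ ≤ (d*(M+2)) * (1-d)^n := by
    intro n
    set i := pick n (u n) with hi
    set v : 𝔄 := (u n).val with hv
    have h1 : (u (n+1)).val - v = -(t i * v) := by
      rw [hus n, Units.val_mul]
      show (1 - t i) * v - v = _
      rw [sub_mul, one_mul, sub_sub_cancel_left]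
    have h2 : t i * v = (d:ℂ) • (v - j (e i) * v) := by
      show ((d:ℂ) • ((1:𝔄) - j (e i))) * v = _
      rw [smul_mul_assoc, sub_mul, one_mul]
    have h3 : eq𝔄 (j (e i) * v) = Unitization.inr (e i) * eq𝔄 v := by
      show WithLp.ofLp (j (e i) * v) = _
      rw [WithLp.unitization_mul]
      congr 1
    have h4 : ‖v - j (e i) * v‖ ≤ (M+2) * (1-d)^n := by
      rw [WithLp.unitization_norm_def]
      have hsub : eq𝔄 (v - j (e i) * v) = eq𝔄 v - eq𝔄 (j (e i) * v) := rfl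
      change ‖(eq𝔄 (v - j (e i) * v)).fst‖ + ‖(eq𝔄 (v - j (e i) * v)).snd‖ ≤ _
      rw [hsub, h3]
      have hfst' : (eq𝔄 v - Unitization.inr (e i) * eq𝔄 v).fst = (((1-d : ℝ) : ℂ))^n := by
        have := hfst n
        simp only [sub_eq_add_neg, Unitization.fst_add, Unitization.fst_neg, Unitization.fst_mul,
          Unitization.fst_inr, zero_mul, neg_zero, add_zero]
        exact this
      have hsnd' : (eq𝔄 v - Unitization.inr (e i) * eq𝔄 v).snd
          = ((eq𝔄 v).snd - e i * (eq𝔄 v).snd) - (eq𝔄 v).fst • e i := by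
        simp only [sub_eq_add_neg, Unitization.snd_add, Unitization.snd_neg, Unitization.snd_mul,
          Unitization.snd_inr, Unitization.fst_inr, zero_smul, zero_add]
        abel
      rw [hfst', hsnd']
      have hn1 : ‖(((1-d : ℝ) : ℂ))^n‖ = (1-d)^n := by
        rw [norm_pow, Complex.norm_real, Real.norm_of_nonneg hdlt.le]
      have hn2 : ‖(eq𝔄 v).snd - e i * (eq𝔄 v).snd‖ ≤ (1-d)^n := by
        rw [norm_sub_rev]
        exact (hp1 n (u n)).le
      have hn3 : ‖(eq𝔄 v).fst • e i‖ ≤ (1-d)^n * M := by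
        rw [norm_smul, hfst n, hn1]
        exact mul_le_mul_of_nonneg_left (hM i) (by positivity)
      have := norm_sub_le ((eq𝔄 v).snd - e i * (eq𝔄 v).snd) ((eq𝔄 v).fst • e i)
      rw [hn1]
      nlinarith [pow_pos hdlt n]
    calc ‖(u (n+1)).val - v‖ = ‖t i * v‖ := by rw [h1, norm_neg]
      _ = d * ‖v - j (e i) * v‖ := by
          rw [h2, norm_smul, Complex.norm_real, Real.norm_of_nonneg hd0.le]
      _ ≤ d * ((M+2) * (1-d)^n) := by
          exact mul_le_mul_of_nonneg_left h4 hd0.le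
      _ = (d*(M+2)) * (1-d)^n := by ring
  have hcauchy_u : CauchySeq (fun n => (u n).val) := by
    refine cauchySeq_of_le_geometric (1-d) (d*(M+2)) hd1' (fun n => ?_)
    rw [dist_eq_norm, norm_sub_rev]
    exact hdiff n
  obtain ⟨w, hw⟩ := cauchySeq_tendsto_of_complete hcauchy_u
  -- the first component of w vanishes
  have hfstw : (eq𝔄 w).fst = 0 := by
    let fstL : 𝔄 →L[ℂ] ℂ := LinearMap.mkContinuous
      { toFun := fun z => (eq𝔄 z).fst
        map_add' := fun z₁ z₂ => rfl
        map_smul' := fun c z => rfl } 1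
      (fun z => by
        rw [one_mul, WithLp.unitization_norm_def]
        have := norm_nonneg (eq𝔄 z).snd
        show ‖(eq𝔄 z).fst‖ ≤ ‖(eq𝔄 z).fst‖ + ‖(eq𝔄 z).snd‖
        linarith)
    have h1 : Tendsto (fun n => fstL (u n).val) atTop (𝓝 (fstL w)) :=
      (fstL.continuous.tendsto w).comp hw
    have h2 : Tendsto (fun n => fstL (u n).val) atTop (𝓝 0) := by
      have heq : (fun n => fstL (u n).val) = fun n => (((1-d : ℝ) : ℂ))^n := by
        funext n; exact hfst n
      rw [heq]
      apply tendsto_pow_atTop_nhds_zero_of_norm_lt_one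
      rw [Complex.norm_real, Real.norm_of_nonneg hdlt.le]
      exact hd1'
    exact tendsto_nhds_unique h1 h2
  -- the sequence y
  let y : ℕ → E := fun n => π ((u n)⁻¹).val x
  have hy0 : y 0 = x := by
    show π ((1 : 𝔄ˣ)⁻¹).val x = x
    rw [inv_one, Units.val_one, map_one, ContinuousLinearMap.one_apply]
  have hyx : ∀ n, π (u n).val (y n) = x := by
    intro n
    show π (u n).val (π ((u n)⁻¹).val x) = x
    rw [← ContinuousLinearMap.comp_apply, ← ContinuousLinearMap.mul_def, ← map_mul,
      ← Units.val_mul, mul_inv_cancel, Units.val_one, map_one, ContinuousLinearMap.one_apply]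
  have hystep : ∀ n, ‖y (n+1) - y n‖ ≤ (ε/4) * (1/2)^n := by
    intro n
    set i := pick n (u n) with hi
    have hinv : ((u (n+1))⁻¹).val = ((u n)⁻¹).val * ((b i)⁻¹).val := by
      rw [hus n, mul_inv_rev, Units.val_mul]
    have hy1 : y (n+1) = π ((u n)⁻¹).val (π ((b i)⁻¹).val x) := by
      show π ((u (n+1))⁻¹).val x = _
      rw [hinv, map_mul, ContinuousLinearMap.mul_apply]
    have hy2 : y (n+1) - y n = π ((u n)⁻¹).val (π ((b i)⁻¹).val x - x) := by
      rw [hy1, map_sub]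
    set D : ℝ := Cσ * ‖((u n)⁻¹).val‖ * (2*d) with hD
    have hD0 : 0 ≤ D := mul_nonneg (mul_nonneg hCσ0.le (norm_nonneg _)) (by linarith)
    have hδ0 : 0 < ((ε/4)*(1/2)^n) / (D + 1) := by
      apply div_pos
      · have : (0:ℝ) < (1/2)^n := by positivity
        nlinarith
      · linarith
    calc ‖y (n+1) - y n‖
        = ‖π ((u n)⁻¹).val (π ((b i)⁻¹).val x - x)‖ := by rw [hy2]
      _ ≤ ‖π ((u n)⁻¹).val‖ * ‖π ((b i)⁻¹).val x - x‖ :=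
          (π ((u n)⁻¹).val).le_opNorm _
      _ ≤ (Cσ * ‖((u n)⁻¹).val‖) * (2 * d * ‖x - σ (e i) x‖) := by
          refine mul_le_mul (hπnorm _) (hbinv i) (norm_nonneg _)
            (mul_nonneg hCσ0.le (norm_nonneg _))
      _ = D * ‖x - σ (e i) x‖ := by rw [hD]; ring
      _ ≤ D * (((ε/4)*(1/2)^n) / (D + 1)) :=
          mul_le_mul_of_nonneg_left (hp2 n (u n)).le hD0
      _ ≤ (D + 1) * (((ε/4)*(1/2)^n) / (D + 1)) := by nlinarith
      _ = (ε/4) * (1/2)^n := by field_simp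
  have hcauchy_y : CauchySeq y := by
    refine cauchySeq_of_le_geometric (1/2) (ε/4) (by norm_num) (fun n => ?_)
    rw [dist_eq_norm, norm_sub_rev]
    exact hystep n
  obtain ⟨yl, hyl⟩ := cauchySeq_tendsto_of_complete hcauchy_y
  -- distance estimate
  have hdistxy : dist x yl ≤ ε/2 := by
    have hsum : Summable (fun n : ℕ => (ε/4) * (1/2:ℝ)^n) :=
      (summable_geometric_of_lt_one (by norm_num) (by norm_num)).mul_left _
    have h1 : dist (y 0) yl ≤ ∑' n, (ε/4) * (1/2:ℝ)^n := by
      refine dist_le_tsum_of_dist_le_of_tendsto₀ _ (fun n => ?_) hsum hyl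
      rw [dist_eq_norm, norm_sub_rev]
      exact hystep n
    have h2 : (∑' n, (ε/4) * (1/2:ℝ)^n) = ε/2 := by
      rw [tsum_mul_left, tsum_geometric_two]
      ring
    rw [← hy0]
    rw [h2] at h1
    exact h1
  -- the limit identity
  have hfinal : π w yl = x := by
    have hL : Tendsto (fun n => Lπ (u n).val) atTop (𝓝 (Lπ w)) :=
      (Lπ.continuous.tendsto w).comp hw
    have ht1 : Tendsto (fun n => π (u n).val (y n)) atTop (𝓝 (π w yl)) := by
      have := (isBoundedBilinearMap_apply.continuous.tendsto ((Lπ w, yl) :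
        (E →L[ℂ] E) × E)).comp (hL.prodMk_nhds hyl)
      exact this
    have ht2 : Tendsto (fun n => π (u n).val (y n)) atTop (𝓝 x) := by
      have heq : (fun n => π (u n).val (y n)) = fun _ => x := funext hyx
      rw [heq]
      exact tendsto_const_nhds
    exact tendsto_nhds_unique ht1 ht2
  refine ⟨(eq𝔄 w).snd, yl, ?_, ?_⟩
  · have : π w = σ (eq𝔄 w).snd := by
      rw [hπ w, hfstw]
      simp
    rw [← this, hfinal]
  · rw [← dist_eq_norm]
    linarith
end
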